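/- Let t ≥ 4 and A_r = C(t,2)·(r−2)_{t−3}/r^{t−2}. If r ≥ (3t²−5t)/6, then A_{r−1} > A_r. -/
import Mathlib

/-- `A_r = C(t,2)·(r−2)(r−3)⋯(r−(t−2))/r^{t−2}`. -/
noncomputable def Afun (t r : ℕ) : ℝ :=
  (t.choose 2 : ℝ) * (∏ i ∈ Finset.Icc 2 (t - 2), ((r : ℝ) - (i : ℝ))) / (r : ℝ) ^ (t - 2)

lemma aux4 (n : ℕ) : 0 ≤ (n:ℝ) * ((n:ℝ) - 1) * ((n:ℝ) - 2) * ((n:ℝ) - 3) := by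
  rcases lt_or_ge n 4 with h | h
  · interval_cases n <;> norm_num
  · have h4 : (4:ℝ) ≤ (n:ℝ) := by exact_mod_cast h
    have h0 : (0:ℝ) ≤ (n:ℝ) := by linarith
    apply mul_nonneg (mul_nonneg (mul_nonneg h0 (by linarith)) (by linarith)) (by linarith)

lemma binom_bound (n : ℕ) (x : ℝ) (hx0 : 0 ≤ x) (hx1 : x ≤ 1) :
    (1 - x)^n ≤ 1 - (n:ℝ)*x + (n:ℝ)*((n:ℝ)-1)/2*x^2 - (n:ℝ)*((n:ℝ)-1)*((n:ℝ)-2)/6*x^3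
      + (n:ℝ)*((n:ℝ)-1)*((n:ℝ)-2)*((n:ℝ)-3)/24*x^4 := by
  induction n with
  | zero => norm_num
  | succ m ih =>
    have haux : 0 ≤ (m:ℝ) * ((m:ℝ) - 1) * ((m:ℝ) - 2) * ((m:ℝ) - 3) := aux4 m
    have h1x : (0:ℝ) ≤ 1 - x := by linarith
    have h2 := mul_le_mul_of_nonneg_left ih h1x
    have hx5 : (0:ℝ) ≤ x^5 := by positivity
    have hpow : (1 - x)^(m+1) = (1-x) * (1-x)^m := by ring
    push_cast
    nlinarith [h2, mul_nonneg haux hx5, hpow]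

lemma tele (n : ℕ) (hn : 2 ≤ n) (R : ℝ) :
    (R - 2) * ∏ i ∈ Finset.Icc 2 n, (R - 1 - (i:ℝ))
      = (R - (n:ℝ) - 1) * ∏ i ∈ Finset.Icc 2 n, (R - (i:ℝ)) := by
  induction n, hn using Nat.le_induction with
  | base => simp [Finset.Icc_self]; push_cast; ring
  | succ m hm ih =>
    rw [Finset.prod_Icc_succ_top (by omega : 2 ≤ m + 1),
        Finset.prod_Icc_succ_top (by omega : 2 ≤ m + 1)]
    push_cast
    push_cast at ih
    linear_combination (R - (m:ℝ) - 2) * ih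

set_option maxHeartbeats 2000000 in
lemma keyineq (n : ℕ) (hn : 2 ≤ n) (R : ℝ)
    (hR : 3*(n:ℝ)^2 + 7*(n:ℝ) + 2 ≤ 6*R) :
    (R - 2) * (R - 1)^n < (R - (n:ℝ) - 1) * R^n := by
  have hN : (2:ℝ) ≤ (n:ℝ) := by exact_mod_cast hn
  set N := (n:ℝ) with hNdef
  have hM : (0:ℝ) ≤ N - 2 := by linarith
  have hD28 : (28:ℝ) ≤ 3*N^2 + 7*N + 2 := by nlinarith
  have hR4 : (4:ℝ) < R := by linarith
  have hR0 : (0:ℝ) < R := by linarith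
  set x : ℝ := 1/R with hxdef
  have hx0 : 0 < x := by rw [hxdef]; positivity
  have hxR : R * x = 1 := by rw [hxdef]; field_simp
  have hx1 : x ≤ 1 := by rw [hxdef, div_le_one hR0]; linarith
  have hx6 : (3*N^2 + 7*N + 2) * x ≤ 6 := by
    have h := mul_le_mul_of_nonneg_right hR (le_of_lt hx0)
    nlinarith [hxR]
  have h61 : 0 ≤ 6 - (3*N^2 + 7*N + 2)*x := by linarith
  -- positivity of the certificate pieces
  have hC1 : (0:ℝ) < 8 - 90*N + 51*N^2 + 10*N^3 + 21*N^4 := by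
    nlinarith [mul_nonneg hM hM, mul_nonneg (mul_nonneg hM hM) hM,
      mul_nonneg (mul_nonneg (mul_nonneg hM hM) hM) hM]
  have hC2 : (0:ℝ) ≤ 52*N + 49*N^2 + (179/2)*N^3 + (129/2)*N^4 + (57/2)*N^5 + (9/2)*N^6 := by
    have hN0 : (0:ℝ) ≤ N := by linarith
    positivity
  have hB : (0:ℝ) ≤ (-23/6)*N + (-5/12)*N^2 + (4/3)*N^3 + (29/12)*N^4 + (1/2)*N^5 := by
    nlinarith [mul_nonneg hM hM, mul_nonneg (mul_nonneg hM hM) hM,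
      mul_nonneg (mul_nonneg (mul_nonneg hM hM) hM) hM,
      mul_nonneg (mul_nonneg (mul_nonneg (mul_nonneg hM hM) hM) hM) hM]
  have hf : (0:ℝ) ≤ (5/12)*N + (-13/24)*N^2 + (1/12)*N^3 + (1/24)*N^4 := by
    have h1 : (0:ℝ) ≤ N * (N - 1) * (N - 2) * (N + 5) := by
      apply mul_nonneg; apply mul_nonneg; apply mul_nonneg <;> linarith
      all_goals linarith
    nlinarith [h1]
  have hg : (0:ℝ) ≤ (-1/2)*N + (11/12)*N^2 + (-1/2)*N^3 + (1/12)*N^4 := by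
    have h1 := aux4 n
    rw [← hNdef] at h1
    nlinarith [h1]
  -- the abbreviations (as plain expressions)
  -- identity: D^3 * G = x * (C1 + C2*(6-D*x) + B*(6-D*x)^2 + f*D^2*x^2*(6-D*x) + g*D^3*x^4)
  have hsum : (0:ℝ) <
      (8 - 90*N + 51*N^2 + 10*N^3 + 21*N^4)
      + (52*N + 49*N^2 + (179/2)*N^3 + (129/2)*N^4 + (57/2)*N^5 + (9/2)*N^6) * (6 - (3*N^2 + 7*N + 2)*x)
      + ((-23/6)*N + (-5/12)*N^2 + (4/3)*N^3 + (29/12)*N^4 + (1/2)*N^5) * (6 - (3*N^2 + 7*N + 2)*x)^2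
      + ((5/12)*N + (-13/24)*N^2 + (1/12)*N^3 + (1/24)*N^4) * (3*N^2 + 7*N + 2)^2 * x^2 * (6 - (3*N^2 + 7*N + 2)*x)
      + ((-1/2)*N + (11/12)*N^2 + (-1/2)*N^3 + (1/12)*N^4) * (3*N^2 + 7*N + 2)^3 * x^4 := by
    have t2 := mul_nonneg hC2 h61
    have t3 := mul_nonneg hB (sq_nonneg (6 - (3*N^2 + 7*N + 2)*x))
    have t4 : (0:ℝ) ≤ ((5/12)*N + (-13/24)*N^2 + (1/12)*N^3 + (1/24)*N^4) * (3*N^2 + 7*N + 2)^2 * x^2 * (6 - (3*N^2 + 7*N + 2)*x) := by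
      apply mul_nonneg _ h61
      apply mul_nonneg _ (sq_nonneg x)
      exact mul_nonneg hf (sq_nonneg _)
    have t5 : (0:ℝ) ≤ ((-1/2)*N + (11/12)*N^2 + (-1/2)*N^3 + (1/12)*N^4) * (3*N^2 + 7*N + 2)^3 * x^4 := by
      apply mul_nonneg (mul_nonneg hg (by positivity)) (by positivity)
    linarith
  have hDG : (0:ℝ) < (3*N^2 + 7*N + 2)^3 *
      (1 - (N+1)*x - (1-2*x)*(1 - N*x + N*(N-1)/2*x^2 - N*(N-1)*(N-2)/6*x^3
        + N*(N-1)*(N-2)*(N-3)/24*x^4)) := by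
    have hid : (3*N^2 + 7*N + 2)^3 *
        (1 - (N+1)*x - (1-2*x)*(1 - N*x + N*(N-1)/2*x^2 - N*(N-1)*(N-2)/6*x^3
          + N*(N-1)*(N-2)*(N-3)/24*x^4))
        = x * ((8 - 90*N + 51*N^2 + 10*N^3 + 21*N^4)
        + (52*N + 49*N^2 + (179/2)*N^3 + (129/2)*N^4 + (57/2)*N^5 + (9/2)*N^6) * (6 - (3*N^2 + 7*N + 2)*x)
        + ((-23/6)*N + (-5/12)*N^2 + (4/3)*N^3 + (29/12)*N^4 + (1/2)*N^5) * (6 - (3*N^2 + 7*N + 2)*x)^2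
        + ((5/12)*N + (-13/24)*N^2 + (1/12)*N^3 + (1/24)*N^4) * (3*N^2 + 7*N + 2)^2 * x^2 * (6 - (3*N^2 + 7*N + 2)*x)
        + ((-1/2)*N + (11/12)*N^2 + (-1/2)*N^3 + (1/12)*N^4) * (3*N^2 + 7*N + 2)^3 * x^4) := by
      ring
    rw [hid]
    exact mul_pos hx0 hsum
  have hG : (0:ℝ) < 1 - (N+1)*x - (1-2*x)*(1 - N*x + N*(N-1)/2*x^2 - N*(N-1)*(N-2)/6*x^3
      + N*(N-1)*(N-2)*(N-3)/24*x^4) := by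
    by_contra hcon
    push_neg at hcon
    have hD0 : (0:ℝ) < 3*N^2 + 7*N + 2 := by linarith
    nlinarith [hDG, pow_pos hD0 3, hcon]
  -- bridge back to R
  have hRG : R * (1 - (N+1)*x - (1-2*x)*(1 - N*x + N*(N-1)/2*x^2 - N*(N-1)*(N-2)/6*x^3
      + N*(N-1)*(N-2)*(N-3)/24*x^4))
      = (R - N - 1) - (R - 2) * (1 - N*x + N*(N-1)/2*x^2 - N*(N-1)*(N-2)/6*x^3
      + N*(N-1)*(N-2)*(N-3)/24*x^4) := by
    linear_combination (2*(1 - N*x + N*(N-1)/2*x^2 - N*(N-1)*(N-2)/6*x^3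
      + N*(N-1)*(N-2)*(N-3)/24*x^4) - N - 1) * hxR
  have h2 : (R - 2) * (1 - N*x + N*(N-1)/2*x^2 - N*(N-1)*(N-2)/6*x^3
      + N*(N-1)*(N-2)*(N-3)/24*x^4) < R - N - 1 := by
    nlinarith [mul_pos hR0 hG, hRG]
  have hbin := binom_bound n x (le_of_lt hx0) hx1
  rw [← hNdef] at hbin
  have hg4 : (R - 2) * (1-x)^n ≤ (R - 2) * (1 - N*x + N*(N-1)/2*x^2 - N*(N-1)*(N-2)/6*x^3
      + N*(N-1)*(N-2)*(N-3)/24*x^4) :=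
    mul_le_mul_of_nonneg_left hbin (by linarith)
  have hRx1 : R * (1 - x) = R - 1 := by linear_combination -hxR
  have hpow : (R - 1)^n = R^n * (1-x)^n := by rw [← hRx1, mul_pow]
  calc (R - 2) * (R - 1)^n = R^n * ((R - 2) * (1-x)^n) := by rw [hpow]; ring
    _ ≤ R^n * ((R - 2) * (1 - N*x + N*(N-1)/2*x^2 - N*(N-1)*(N-2)/6*x^3
        + N*(N-1)*(N-2)*(N-3)/24*x^4)) := mul_le_mul_of_nonneg_left hg4 (le_of_lt (pow_pos hR0 n))
    _ < R^n * (R - N - 1) := mul_lt_mul_of_pos_left h2 (pow_pos hR0 n)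
    _ = (R - N - 1) * R^n := by ring

/-- For `t ≥ 4` and `r ≥ (3t²−5t)/6`, we have `A_{r−1} > A_r`. -/
theorem stmt8 (t r : ℕ) (ht : 4 ≤ t) (hr : 3 * t ^ 2 - 5 * t ≤ 6 * r) :
    Afun t r < Afun t (r - 1) := by
  simp only [Afun]
  set n := t - 2 with hn
  have hn2 : 2 ≤ n := by omega
  have h5t : 5*t ≤ 3*t^2 := by nlinarith
  have h2 : ((3*t^2:ℕ):ℝ) - ((5*t:ℕ):ℝ) ≤ ((6*r:ℕ):ℝ) := by
    rw [← Nat.cast_sub h5t]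
    exact_mod_cast hr
  push_cast at h2
  have ht2 : (t:ℝ) = (n:ℝ) + 2 := by
    have : t = n + 2 := by omega
    exact_mod_cast this
  have hrR : 3*(n:ℝ)^2 + 7*(n:ℝ) + 2 ≤ 6*(r:ℝ) := by
    rw [ht2] at h2; nlinarith [h2]
  have hrn : n + 3 ≤ r := by
    by_contra hcon
    push_neg at hcon
    have h6 : (6:ℝ)*(r:ℝ) ≤ 6*(n:ℝ) + 12 := by
      exact_mod_cast (by omega : 6*r ≤ 6*n + 12)
    have hN2 : (2:ℝ) ≤ (n:ℝ) := by exact_mod_cast hn2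
    nlinarith [hrR, h6, hN2, sq_nonneg ((n:ℝ) - 2)]
  have hr1 : 1 ≤ r := by omega
  have hcast : ((r-1:ℕ):ℝ) = (r:ℝ) - 1 := by
    rw [Nat.cast_sub hr1, Nat.cast_one]
  rw [hcast]
  have hRge : (n:ℝ) + 3 ≤ (r:ℝ) := by exact_mod_cast hrn
  have hR0 : (0:ℝ) < (r:ℝ) := by linarith [Nat.cast_nonneg (α := ℝ) n]
  have hR1 : (0:ℝ) < (r:ℝ) - 1 := by linarith [Nat.cast_nonneg (α := ℝ) n]
  have hR2 : (0:ℝ) < (r:ℝ) - 2 := by linarith [Nat.cast_nonneg (α := ℝ) n]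
  have hP : 0 < ∏ i ∈ Finset.Icc 2 n, ((r:ℝ) - (i:ℝ)) := by
    apply Finset.prod_pos
    intro i hi
    have h2i := (Finset.mem_Icc.mp hi).2
    have : (i:ℝ) ≤ (n:ℝ) := by exact_mod_cast h2i
    linarith
  rw [div_lt_div_iff₀ (pow_pos hR0 n) (pow_pos hR1 n)]
  have hkey := keyineq n hn2 (r:ℝ) hrR
  have htele := tele n hn2 (r:ℝ)
  have hc : (0:ℝ) < (t.choose 2:ℝ) := by
    exact_mod_cast Nat.choose_pos (by omega : 2 ≤ t)
  have hm := mul_lt_mul_of_pos_left hkey hP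
  have h3 : ((r:ℝ) - 2) * (∏ i ∈ Finset.Icc 2 n, ((r:ℝ) - 1 - (i:ℝ))) * (r:ℝ)^n
      = ((r:ℝ) - (n:ℝ) - 1) * (∏ i ∈ Finset.Icc 2 n, ((r:ℝ) - (i:ℝ))) * (r:ℝ)^n := by
    rw [htele]
  have h4 : ((r:ℝ) - 2) * ((∏ i ∈ Finset.Icc 2 n, ((r:ℝ) - (i:ℝ))) * ((r:ℝ) - 1)^n)
      < ((r:ℝ) - 2) * ((∏ i ∈ Finset.Icc 2 n, ((r:ℝ) - 1 - (i:ℝ))) * (r:ℝ)^n) := by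
    nlinarith [hm, h3]
  have hfin := lt_of_mul_lt_mul_left h4 (le_of_lt hR2)
  nlinarith [mul_lt_mul_of_pos_left hfin hc]
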